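/- Let F be a field whose characteristic does not divide k (k ≥ 1). If M is a non-zero m^k×n^k matrix over F and A is an m×n matrix over F such that M = ⊗^k A, then R^Σ_{m×n}(M) has rank one. -/

import Mathlib

open Matrix Kronecker

/-- `vec A` is the vector of entries of the matrix `A`, indexed by pairs. -/
def vec {F : Type*} [Field F] {α β : Type*} (A : Matrix α β F) : α × β → F :=
  fun p => A p.1 p.2

/-- The rearrangement operator `R_{m×n}`:
`R M ((i,j),(k,l)) = M ((i,k),(j,l))`. -/
def R {F : Type*} [Field F] {m n : ℕ}
    (M : Matrix (Fin m × Fin m) (Fin n × Fin n) F) :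
    Matrix (Fin m × Fin n) (Fin m × Fin n) F :=
  fun p q => M (p.1, q.1) (p.2, q.2)

/-- The `j`-th rearrangement operator `R^{(j)}_{m×n}` on `m^k × n^k` matrices
(here with `k` replaced by `k+1` so that `k ≥ 1` automatically): the entry at
row `(a,b)` and column `(r,c)` is the entry of `M` at the tuples obtained from
`r` and `c` by inserting `a` resp. `b` at position `j`. -/
def Rj {F : Type*} [Field F] {m n k : ℕ} (j : Fin (k + 1))
    (M : Matrix (Fin (k + 1) → Fin m) (Fin (k + 1) → Fin n) F) :
    Matrix (Fin m × Fin n) ((Fin k → Fin m) × (Fin k → Fin n)) F :=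
  fun p q => M (j.insertNth p.1 q.1) (j.insertNth p.2 q.2)

/-- `R^Σ_{m×n} = Σ_j R^{(j)}_{m×n}`. -/
def RSigma {F : Type*} [Field F] {m n k : ℕ}
    (M : Matrix (Fin (k + 1) → Fin m) (Fin (k + 1) → Fin n) F) :
    Matrix (Fin m × Fin n) ((Fin k → Fin m) × (Fin k → Fin n)) F :=
  ∑ j : Fin (k + 1), Rj j M

/-- The `k`-th Kronecker power of an `m×n` matrix, indexed by tuples. -/
def kpow {F : Type*} [Field F] {m n : ℕ} (A : Matrix (Fin m) (Fin n) F) (k : ℕ) :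
    Matrix (Fin k → Fin m) (Fin k → Fin n) F :=
  fun r c => ∏ i, A (r i) (c i)

/-- The `k`-fold Kronecker product of a family of `m×n` matrices,
indexed by tuples. -/
def kprodFam {F : Type*} [Field F] {m n k : ℕ}
    (A : Fin k → Matrix (Fin m) (Fin n) F) :
    Matrix (Fin k → Fin m) (Fin k → Fin n) F :=
  fun r c => ∏ i, A i (r i) (c i)

/-- If the characteristic of `F` does not divide `k` and the
non-zero matrix `M` is a `k`-th Kronecker power, then `R^Σ(M)` has rank one
(here the order `k ≥ 1` of the paper is represented as `k + 1`). -/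
lemma rank_ne_zero_of_ne_zero {R : Type*} [Field R] {m n : Type*} [Fintype n] [Fintype m]
    [DecidableEq n] (A : Matrix m n R) (h : A ≠ 0) : A.rank ≠ 0 := by
  intro h0
  apply h
  rw [Matrix.rank, Submodule.finrank_eq_zero, LinearMap.range_eq_bot] at h0
  ext i j
  have := congrFun (LinearMap.congr_fun h0 (Pi.single j 1)) i
  simpa [Matrix.mulVecLin_apply, Matrix.mulVec_single] using this

lemma rank_vecMulVec_le' {R : Type*} [Field R] {m n : Type*} [Fintype n] [Fintype m]
    (u : m → R) (v : n → R) : (Matrix.vecMulVec u v).rank ≤ 1 := by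
  rw [Matrix.vecMulVec_eq (Fin 1)]
  calc (Matrix.replicateCol (Fin 1) u * Matrix.replicateRow (Fin 1) v).rank
      ≤ (Matrix.replicateCol (Fin 1) u).rank := Matrix.rank_mul_le_left _ _
    _ ≤ Fintype.card (Fin 1) := Matrix.rank_le_card_width _
    _ = 1 := by simp

theorem stmt_12 {F : Type*} [Field F] {m n k : ℕ}
    (hchar : ((k + 1 : ℕ) : F) ≠ 0)
    (M : Matrix (Fin (k + 1) → Fin m) (Fin (k + 1) → Fin n) F) (hM : M ≠ 0)
    (A : Matrix (Fin m) (Fin n) F) (h : M = kpow A (k + 1)) :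
    (RSigma M).rank = 1 := by
  -- RSigma M is the outer product of (k+1) • vec A with vec (kpow A k)
  have hR : RSigma M = Matrix.vecMulVec (fun p => ((k + 1 : ℕ) : F) * _root_.vec A p)
      (_root_.vec (kpow A k)) := by
    subst h
    ext p q
    simp only [RSigma, Matrix.sum_apply, Rj, kpow, Matrix.vecMulVec_apply]
    have key : ∀ j : Fin (k + 1),
        (∏ i, A ((j.insertNth p.1 q.1 : Fin (k + 1) → Fin m) i)
          ((j.insertNth p.2 q.2 : Fin (k + 1) → Fin n) i))
          = A p.1 p.2 * ∏ i, A (q.1 i) (q.2 i) := by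
      intro j
      rw [Fin.prod_univ_succAbove (fun i => A ((j.insertNth p.1 q.1 : Fin (k + 1) → Fin m) i)
        ((j.insertNth p.2 q.2 : Fin (k + 1) → Fin n) i)) j]
      simp
    rw [Finset.sum_congr rfl (fun j _ => key j), Finset.sum_const, Finset.card_univ,
      Fintype.card_fin, nsmul_eq_mul]
    simp only [_root_.vec, kpow]
    push_cast
    ring
  -- A has a nonzero entry
  have hA : ∃ a b, A a b ≠ 0 := by
    by_contra hc
    push_neg at hc
    apply hM
    subst h
    ext r c
    simp [kpow, hc]
  obtain ⟨a, b, hab⟩ := hA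
  -- the matrix is nonzero
  have hne : RSigma M ≠ 0 := by
    intro h0
    have := congrFun (congrFun h0 (a, b)) (fun _ => a, fun _ => b)
    rw [hR] at this
    simp only [Matrix.vecMulVec_apply, _root_.vec, kpow, Matrix.zero_apply] at this
    rw [Finset.prod_const] at this
    rcases mul_eq_zero.mp this with h1 | h2
    · exact (mul_ne_zero hchar hab) h1
    · exact pow_ne_zero _ hab h2
  have h1 : (RSigma M).rank ≤ 1 := hR ▸ rank_vecMulVec_le' _ _
  have h2 : (RSigma M).rank ≠ 0 := rank_ne_zero_of_ne_zero _ hne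
  omega
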